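/- If a Banach space Z is stable under finite dimensional quotients and F is a finite dimensional Banach space, then Z is isomorphic to Z × F. -/

import Mathlib

/-- A Banach space `Z` is *stable under finite dimensional quotients* if `Z` is
isomorphic (via a continuous linear equivalence) to every closed subspace of `Z`
that admits a finite dimensional complement. -/
def StableUnderFinDimQuotients (Z : Type*) [NormedAddCommGroup Z] [NormedSpace ℂ Z] : Prop :=
  ∀ V F : Submodule ℂ Z, IsClosed (V : Set Z) → IsCompl V F → FiniteDimensional ℂ F →
    Nonempty (Z ≃L[ℂ] V)

theorem stable_iso_prod_finDim
    (Z : Type*) [NormedAddCommGroup Z] [NormedSpace ℂ Z] [CompleteSpace Z]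
    (hZ : StableUnderFinDimQuotients Z) (hinf : ¬ FiniteDimensional ℂ Z)
    (F : Type*) [NormedAddCommGroup F] [NormedSpace ℂ F] [FiniteDimensional ℂ F] :
    Nonempty (Z ≃L[ℂ] (Z × F)) := by
  classical
  set n := Module.finrank ℂ F with hn
  -- Z is infinite dimensional, so we can find `n` linearly independent vectors.
  have hrank : (n : Cardinal) ≤ Module.rank ℂ Z := by
    refine le_trans (le_of_lt (Cardinal.nat_lt_aleph0 n)) ?_
    by_contra h
    exact hinf (Module.rank_lt_aleph0_iff.mp (lt_of_not_ge h))
  obtain ⟨x, hx⟩ : ∃ f : Fin n → Z, LinearIndependent ℂ f :=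
    exists_linearIndependent_of_le_rank hrank
  -- Let G be the span of these vectors, a subspace of dimension n.
  set G : Submodule ℂ Z := Submodule.span ℂ (Set.range x) with hG
  have hGfin : FiniteDimensional ℂ G := by
    exact FiniteDimensional.span_of_finite ℂ (Set.finite_range x)
  have hGrank : Module.finrank ℂ G = n := by
    simpa using finrank_span_eq_card hx
  -- Basis of G from x, and continuous coordinate functionals on G
  let b : Module.Basis (Fin n) ℂ G := Module.Basis.span hx
  let c : Fin n → (G →L[ℂ] ℂ) := fun i =>
    ⟨b.coord i, LinearMap.continuous_of_finiteDimensional _⟩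
  -- Extend each coordinate functional to Z by Hahn-Banach
  have hext : ∀ i : Fin n, ∃ g : Z →L[ℂ] ℂ, ∀ y : G, g y = c i y := by
    intro i
    obtain ⟨g, hg, -⟩ := exists_extension_norm_eq G (c i)
    exact ⟨g, hg⟩
  choose f hf using hext
  have hfx : ∀ i j, f i (x j) = if j = i then 1 else 0 := by
    intro i j
    have hxj : x j ∈ G := Submodule.subset_span ⟨j, rfl⟩
    have : f i (⟨x j, hxj⟩ : G) = c i ⟨x j, hxj⟩ := hf i _
    rw [show ((⟨x j, hxj⟩ : G) : Z) = x j from rfl] at this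
    rw [this]
    have hb : (⟨x j, hxj⟩ : G) = b j := by
      apply Subtype.ext
      exact congrArg Subtype.val (Module.Basis.span_apply hx j).symm
    show b.coord i ⟨x j, hxj⟩ = _
    rw [hb, Module.Basis.coord_apply, b.repr_self]
    simp [Finsupp.single_apply]
  -- V is the joint kernel of the f i
  let T : Z →L[ℂ] (Fin n → ℂ) := ContinuousLinearMap.pi f
  set V : Submodule ℂ Z := LinearMap.ker (T : Z →ₗ[ℂ] (Fin n → ℂ)) with hV
  have hVclosed : IsClosed (V : Set Z) := by
    have : (V : Set Z) = T ⁻¹' {0} := by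
      ext z; simp [hV, LinearMap.mem_ker]
    rw [this]
    exact isClosed_singleton.preimage T.continuous
  -- V and G are complementary
  have hcompl : IsCompl V G := by
    constructor
    · rw [disjoint_iff_inf_le]
      intro z ⟨hzV, hzG⟩
      have hker : ∀ i, f i z = 0 := by
        intro i
        have := (LinearMap.mem_ker.mp hzV)
        exact congrFun this i
      have hcoord : ∀ i, b.coord i (⟨z, hzG⟩ : G) = 0 := by
        intro i
        exact ((hf i ⟨z, hzG⟩).symm.trans (hker i))
      have : (⟨z, hzG⟩ : G) = 0 := by
        apply b.ext_elem
        intro i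
        simpa [Module.Basis.coord_apply] using hcoord i
      simpa using congrArg Subtype.val this
    · rw [codisjoint_iff_le_sup]
      intro z _
      set g : Z := ∑ i, f i z • x i with hg
      have hgG : g ∈ G := by
        apply Submodule.sum_mem
        intro i _
        exact Submodule.smul_mem _ _ (Submodule.subset_span ⟨i, rfl⟩)
      have hzg : z - g ∈ V := by
        rw [hV, LinearMap.mem_ker]
        funext j
        have : f j g = f j z := by
          rw [hg, map_sum]
          simp only [map_smul, hfx, smul_eq_mul]
          rw [Finset.sum_eq_single j]
          · simp
          · intro i _ hij; simp [hij]
          · intro h; exact absurd (Finset.mem_univ j) h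
        show f j (z - g) = 0
        rw [map_sub, this, sub_self]
      have : z = (z - g) + g := by abel
      rw [this]
      exact Submodule.add_mem_sup hzg hgG
  -- Apply stability
  obtain ⟨e⟩ := hZ V G hVclosed hcompl hGfin
  -- Assemble the equivalence
  have hGclosed : IsClosed (G : Set Z) := Submodule.closed_of_finiteDimensional G
  let e2 : (V × G) ≃L[ℂ] Z := Submodule.prodEquivOfClosedCompl V G hcompl hVclosed hGclosed
  have hfr : Module.finrank ℂ G = Module.finrank ℂ F := by rw [hGrank]
  let e3 : G ≃L[ℂ] F := ContinuousLinearEquiv.ofFinrankEq hfr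
  exact ⟨e2.symm.trans (e.symm.prodCongr e3)⟩
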